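/- arXiv:math/0606760 — 4 statements merged into one kernel-verified Lean document; each statement's English description precedes it below -/
import Mathlib

section
/- For every integer n ≥ 1 and every real number η, one has (1/π) ∫_{−∞}^{∞} e^{(2+it)² − 2η(2+it)} (2+it)^{−n} dt = 2^n / (√π (n−1)!) · ∫_η^∞ (ξ−η)^{n−1} e^{−ξ²} dξ; here the left-hand side (an integral of a complex-valued function over the real line, i.e. the contour integral (1/(πi))∫_{Γ'} e^{v²−2ηv} v^{−n} dv along the vertical line Γ' given by Re v = 2 traversed upwards) is equal to the real number on the right-hand side. -/
open Real MeasureTheory Complex Set Filter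

-- real integrability
lemma auxIntOnR (n : ℕ) {c : ℝ} (hc : 0 < c) :
    IntegrableOn (fun s : ℝ => s ^ n * Real.exp (-(c * s))) (Set.Ioi 0) := by
  have := integrableOn_rpow_mul_exp_neg_mul_rpow (p := 1) (s := n) (b := c)
    (lt_of_lt_of_le neg_one_lt_zero (Nat.cast_nonneg n)) one_pos hc
  refine (this.congr_fun (fun x hx => ?_) measurableSet_Ioi)
  rw [mem_Ioi] at hx
  simp only [Real.rpow_one, Real.rpow_natCast, neg_mul]

-- complex integrability
lemma auxIntOnC (n : ℕ) {v : ℂ} (hv : 0 < v.re) :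
    IntegrableOn (fun s : ℝ => (s : ℂ) ^ n * Complex.exp (-(v * s))) (Set.Ioi 0) := by
  refine ((auxIntOnR n hv).mono' ?_ ?_)
  · exact (Continuous.aestronglyMeasurable (by continuity)).restrict
  · filter_upwards [ae_restrict_mem measurableSet_Ioi] with s hs
    rw [mem_Ioi] at hs
    rw [norm_mul, Complex.norm_exp, norm_pow, Complex.norm_real, Real.norm_eq_abs,
      abs_of_pos hs]
    simp [Real.exp_le_exp, mul_comm]

lemma hasDerivAt_cexp_neg_mul (v : ℂ) (s : ℝ) :
    HasDerivAt (fun s : ℝ => Complex.exp (-(v * s))) (-v * Complex.exp (-(v * s))) s := by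
  have h1 : HasDerivAt (fun s : ℝ => -(v * s)) (-v) s := by
    exact ((Complex.ofRealCLM.hasDerivAt (x := s)).const_mul v).neg.congr_deriv (by simp)
  simpa [mul_comm] using h1.cexp

lemma hasDerivAt_ofReal_pow (k : ℕ) (s : ℝ) :
    HasDerivAt (fun s : ℝ => (s : ℂ) ^ k) (k * (s : ℂ) ^ (k - 1)) s := by
  simpa using (hasDerivAt_pow k s).ofReal_comp

lemma tendsto_pow_mul_cexp (k : ℕ) {v : ℂ} (hv : 0 < v.re) :
    Tendsto (fun s : ℝ => (s : ℂ) ^ k * Complex.exp (-(v * s))) atTop (nhds 0) := by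
  rw [tendsto_zero_iff_norm_tendsto_zero]
  have h := tendsto_rpow_mul_exp_neg_mul_atTop_nhds_zero k v.re hv
  refine h.congr' ?_
  filter_upwards [eventually_gt_atTop 0] with s hs
  rw [norm_mul, norm_pow, Complex.norm_real, Real.norm_eq_abs,
    Complex.norm_exp, abs_of_pos hs, Real.rpow_natCast]
  congr 1
  simp [neg_mul]

lemma laplaceC (n : ℕ) {v : ℂ} (hv : 0 < v.re) :
    ∫ s in Set.Ioi (0:ℝ), (s : ℂ) ^ n * Complex.exp (-(v * s)) = n.factorial / v ^ (n + 1) := by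
  have hv0 : v ≠ 0 := fun h => by simp [h] at hv
  induction n with
  | zero =>
    have key := integral_Ioi_of_hasDerivAt_of_tendsto' (a := (0:ℝ)) (m := (0:ℂ))
      (f := fun s : ℝ => -Complex.exp (-(v * s)) / v)
      (f' := fun s : ℝ => Complex.exp (-(v * s)))
      (fun x _ => by
        simpa [neg_div, neg_neg, mul_div_assoc, mul_div_cancel_left₀ _ hv0] using
          ((hasDerivAt_cexp_neg_mul v x).neg.div_const v))
      (by simpa using auxIntOnC 0 hv)
      (by simpa [neg_div] using ((tendsto_pow_mul_cexp 0 hv).div_const v).neg)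
    simp only [pow_zero, one_mul] at key ⊢
    rw [key]
    simp [Nat.factorial, neg_div, one_div]
  | succ k ih =>
    set I := ∫ s in Set.Ioi (0:ℝ), (s : ℂ) ^ (k+1) * Complex.exp (-(v * s)) with hI
    have int1 : IntegrableOn (fun s : ℝ => ((k:ℂ)+1) * ((s : ℂ) ^ k * Complex.exp (-(v * s))))
        (Set.Ioi 0) := (auxIntOnC k hv).const_mul _
    have int2 : IntegrableOn (fun s : ℝ => v * ((s : ℂ) ^ (k+1) * Complex.exp (-(v * s))))
        (Set.Ioi 0) := (auxIntOnC (k+1) hv).const_mul _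
    have key := integral_Ioi_of_hasDerivAt_of_tendsto' (a := (0:ℝ)) (m := (0:ℂ))
      (f := fun s : ℝ => (s : ℂ) ^ (k+1) * Complex.exp (-(v * s)))
      (f' := fun s : ℝ => ((k:ℂ)+1) * ((s : ℂ) ^ k * Complex.exp (-(v * s)))
          - v * ((s : ℂ) ^ (k+1) * Complex.exp (-(v * s))))
      (fun x _ => by
        have := (hasDerivAt_ofReal_pow (k+1) x).mul (hasDerivAt_cexp_neg_mul v x)
        convert this using 1
        case e'_8 => rfl
        case e'_4 => rfl
        push_cast [Nat.add_sub_cancel]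
        ring)
      (int1.sub int2)
      (tendsto_pow_mul_cexp (k+1) hv)
    rw [integral_sub int1 int2, integral_const_mul, integral_const_mul, ih, ← hI] at key
    norm_num at key
    rw [eq_div_iff (pow_ne_zero _ hv0)]
    field_simp at key
    push_cast [Nat.factorial_succ]
    linear_combination -key

lemma integral_comp_add_right_Ioi (g : ℝ → ℝ) (a c : ℝ) :
    ∫ x in Set.Ioi a, g (x + c) = ∫ x in Set.Ioi (a + c), g x := by
  rw [← integral_indicator measurableSet_Ioi, ← integral_indicator measurableSet_Ioi,
    ← integral_add_right_eq_self ((Set.Ioi (a + c)).indicator g) c]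
  congr 1
  ext x
  by_cases hx : a < x
  · rw [Set.indicator_of_mem (by simpa using hx),
      Set.indicator_of_mem (by simp [hx])]
  · rw [Set.indicator_of_notMem (by simpa using hx),
      Set.indicator_of_notMem (by simp [hx])]

lemma realSub (m : ℕ) (η : ℝ) :
    ∫ s in Set.Ioi (0:ℝ), s ^ m * Real.exp (-(η + s / 2) ^ 2)
      = 2 ^ (m + 1) * ∫ ξ in Set.Ioi η, (ξ - η) ^ m * Real.exp (-ξ ^ 2) := by
  have h2 : (0:ℝ) < 2 := two_pos
  set g : ℝ → ℝ := fun x => x ^ m * Real.exp (-(η + x) ^ 2) with hg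
  have step1 : ∫ ξ in Set.Ioi η, (ξ - η) ^ m * Real.exp (-ξ ^ 2)
      = ∫ x in Set.Ioi (0:ℝ), g x := by
    have h := integral_comp_add_right_Ioi (fun ξ => (ξ - η) ^ m * Real.exp (-ξ ^ 2)) 0 η
    rw [zero_add] at h
    rw [← h]
    congr 1
    ext x
    simp [g, add_comm]
  have step2 : ∫ s in Set.Ioi (0:ℝ), g (2⁻¹ * s) = 2 • ∫ x in Set.Ioi (0:ℝ), g x := by
    have := integral_comp_mul_left_Ioi g 0 (b := 2⁻¹) (by norm_num)
    rw [mul_zero] at this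
    rw [this]
    norm_num
  have step3 : ∀ s : ℝ, s ^ m * Real.exp (-(η + s / 2) ^ 2) = 2 ^ m * g (2⁻¹ * s) := by
    intro s
    simp only [g, mul_pow]
    rw [← mul_assoc, ← mul_assoc, ← mul_pow]
    · ring_nf
  rw [step1]
  calc ∫ s in Set.Ioi (0:ℝ), s ^ m * Real.exp (-(η + s / 2) ^ 2)
      = ∫ s in Set.Ioi (0:ℝ), 2 ^ m * g (2⁻¹ * s) := by
        exact integral_congr_ae (Filter.Eventually.of_forall fun s => step3 s)
    _ = 2 ^ m * ∫ s in Set.Ioi (0:ℝ), g (2⁻¹ * s) := integral_const_mul _ _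
    _ = 2 ^ (m + 1) * ∫ x in Set.Ioi (0:ℝ), g x := by rw [step2]; ring

lemma re_exponent (t a : ℝ) :
    ((2 + t * Complex.I) ^ 2 - (a : ℂ) * (2 + t * Complex.I)).re = 4 - t ^ 2 - 2 * a := by
  simp [pow_two, Complex.sub_re, Complex.mul_re, Complex.add_re, Complex.add_im,
    Complex.mul_im, Complex.ofReal_re, Complex.ofReal_im, Complex.I_re, Complex.I_im]
  ring

lemma inner_gauss (a : ℝ) :
    ∫ t : ℝ, Complex.exp ((2 + t * Complex.I) ^ 2 - (a : ℂ) * (2 + t * Complex.I))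
      = (Real.sqrt Real.pi : ℂ) * Complex.exp (-(((a : ℂ) / 2) ^ 2)) := by
  have hb : ((-1 : ℂ)).re < 0 := by norm_num
  have hrw : ∀ t : ℝ, (2 + t * Complex.I) ^ 2 - (a : ℂ) * (2 + t * Complex.I)
      = (-1) * t ^ 2 + ((4 - a) * Complex.I) * t + (4 - 2 * a) := fun t => by
    linear_combination (t : ℂ) ^ 2 * Complex.I_sq
  have key := integral_cexp_quadratic hb ((4 - (a:ℂ)) * Complex.I) (4 - 2 * a)
  simp_rw [hrw]
  rw [key]
  congr 1
  · rw [neg_neg, div_one, Real.sqrt_eq_rpow, Complex.ofReal_cpow Real.pi_pos.le]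
    push_cast
    ring_nf
  · congr 1
    field_simp
    linear_combination (4 * ((a:ℂ) ^ 2 - 8 * (a:ℂ) + 16)) * Complex.I_sq

/-- For `n ≥ 1` and real `η`,
`(1/π) ∫_ℝ e^{(2+it)² - 2η(2+it)} (2+it)^{-n} dt
  = 2^n/(√π (n-1)!) ∫_η^∞ (ξ-η)^{n-1} e^{-ξ²} dξ`,
i.e. the contour integral `(1/(πi)) ∫_{Re v = 2} e^{v²-2ηv} v^{-n} dv` equals the real
number on the right. -/
theorem stmt1 (n : ℕ) (hn : 1 ≤ n) (η : ℝ) :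
    (1 / (Real.pi : ℂ)) *
        ∫ t : ℝ,
          Complex.exp ((2 + t * Complex.I) ^ 2 - 2 * (η : ℂ) * (2 + t * Complex.I)) *
            (2 + t * Complex.I) ^ (-(n : ℤ)) =
      ((2 ^ n / (Real.sqrt Real.pi * (n - 1).factorial) *
          ∫ ξ in Set.Ioi η, (ξ - η) ^ (n - 1) * Real.exp (-ξ ^ 2) : ℝ) : ℂ) := by
  obtain ⟨m, rfl⟩ : ∃ m, n = m + 1 := ⟨n - 1, (Nat.succ_pred_eq_of_pos hn).symm⟩
  set F : ℝ → ℝ → ℂ := fun t s =>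
    (s : ℂ) ^ m *
      Complex.exp ((2 + t * Complex.I) ^ 2 - ((2 * η + s : ℝ) : ℂ) * (2 + t * Complex.I))
    with hF
  have hvre : ∀ t : ℝ, ((2 : ℂ) + t * Complex.I).re = 2 := fun t => by simp
  have hvpos : ∀ t : ℝ, 0 < ((2 : ℂ) + t * Complex.I).re := fun t => by rw [hvre]; norm_num
  have hv0 : ∀ t : ℝ, (2 : ℂ) + t * Complex.I ≠ 0 := fun t h => by
    have := hvre t; rw [h] at this; simp at this
  have hm0 : ((m.factorial : ℂ)) ≠ 0 := Nat.cast_ne_zero.mpr m.factorial_ne_zero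
  -- Step A: pointwise Laplace representation
  have hA : ∀ t : ℝ,
      Complex.exp ((2 + t * Complex.I) ^ 2 - 2 * (η : ℂ) * (2 + t * Complex.I)) *
          (2 + t * Complex.I) ^ (-((m + 1 : ℕ) : ℤ))
        = (1 / (m.factorial : ℂ)) * ∫ s in Set.Ioi (0:ℝ), F t s := by
    intro t
    set v : ℂ := 2 + t * Complex.I with hv
    have hl := laplaceC m (v := v) (hvpos t)
    have hsplit : ∀ s : ℝ, F t s
        = ((s : ℂ) ^ m * Complex.exp (-(v * s))) *
            Complex.exp (v ^ 2 - 2 * (η : ℂ) * v) := fun s => by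
      rw [hF]
      simp only []
      rw [mul_assoc, ← Complex.exp_add]
      congr 2
      push_cast
      ring
    rw [MeasureTheory.integral_congr_ae (Filter.Eventually.of_forall hsplit),
      integral_mul_const, hl]
    rw [zpow_neg, zpow_natCast]
    field_simp
  simp_rw [hA]
  rw [MeasureTheory.integral_const_mul]
  -- Fubini
  have hnorm : ∀ p : ℝ × ℝ, ‖Function.uncurry F p‖
      = (Real.exp (4 - 4 * η) * Real.exp (-(1:ℝ) * p.1 ^ 2)) *
        (|p.2| ^ m * Real.exp (-(2 * p.2))) := by
    rintro ⟨t, s⟩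
    show ‖F t s‖ = _
    rw [hF]
    simp only []
    rw [norm_mul, norm_pow, Complex.norm_real, Complex.norm_exp,
      re_exponent t (2 * η + s), Real.norm_eq_abs,
      show Real.exp (4 - 4 * η) * Real.exp (-(1:ℝ) * t ^ 2) * (|s| ^ m * Real.exp (-(2 * s)))
        = |s| ^ m * (Real.exp (4 - 4 * η) * (Real.exp (-(1:ℝ) * t ^ 2) * Real.exp (-(2 * s))))
        from by ring, ← Real.exp_add, ← Real.exp_add]
    congr 2
    ring
  have h1 : Integrable (fun t : ℝ => Real.exp (4 - 4 * η) * Real.exp (-(1:ℝ) * t ^ 2)) :=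
    (integrable_exp_neg_mul_sq one_pos).const_mul _
  have h2 : IntegrableOn (fun s : ℝ => |s| ^ m * Real.exp (-(2 * s))) (Set.Ioi 0) :=
    (auxIntOnR m two_pos).congr_fun
      (fun s hs => by rw [abs_of_pos (Set.mem_Ioi.mp hs)]) measurableSet_Ioi
  have hcont : Continuous (Function.uncurry F) := by
    rw [hF]
    apply Continuous.mul
    · fun_prop
    · exact Complex.continuous_exp.comp (by fun_prop)
  have hG : Integrable (fun p : ℝ × ℝ =>
      (Real.exp (4 - 4 * η) * Real.exp (-(1:ℝ) * p.1 ^ 2)) * (|p.2| ^ m * Real.exp (-(2 * p.2))))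
      (volume.prod (volume.restrict (Set.Ioi 0))) := h1.mul_prod h2
  have hInt : Integrable (Function.uncurry F) (volume.prod (volume.restrict (Set.Ioi 0))) :=
    hG.mono' hcont.aestronglyMeasurable (Filter.Eventually.of_forall fun p => (hnorm p).le)
  rw [MeasureTheory.integral_integral_swap hInt]
  have hinner : ∀ s ∈ Set.Ioi (0:ℝ), (∫ t : ℝ, F t s)
      = ((Real.sqrt Real.pi : ℂ)) * (((s ^ m * Real.exp (-(η + s / 2) ^ 2) : ℝ)) : ℂ) := by
    intro s _
    rw [hF]
    simp only []
    rw [MeasureTheory.integral_const_mul, inner_gauss (2 * η + s),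
      show -((((2 * η + s : ℝ)) : ℂ) / 2) ^ 2 = ((-(η + s / 2) ^ 2 : ℝ) : ℂ) from by
        push_cast; ring,
      ← Complex.ofReal_exp]
    push_cast
    ring
  have hcast : ∫ a in Set.Ioi (0:ℝ), ((a ^ m * Real.exp (-(η + a / 2) ^ 2) : ℝ) : ℂ)
      = ((∫ a in Set.Ioi (0:ℝ), a ^ m * Real.exp (-(η + a / 2) ^ 2) : ℝ) : ℂ) :=
    integral_ofReal
  rw [MeasureTheory.setIntegral_congr_fun measurableSet_Ioi hinner,
    MeasureTheory.integral_const_mul, hcast, realSub m η]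
  have hsq : (Real.sqrt Real.pi : ℂ) * (Real.sqrt Real.pi : ℂ) = (Real.pi : ℂ) := by
    rw [← Complex.ofReal_mul, Real.mul_self_sqrt Real.pi_pos.le]
  have hπ : (Real.pi : ℂ) ≠ 0 := Complex.ofReal_ne_zero.mpr Real.pi_ne_zero
  have hs0 : (Real.sqrt Real.pi : ℂ) ≠ 0 :=
    Complex.ofReal_ne_zero.mpr (Real.sqrt_pos.mpr Real.pi_pos).ne'
  simp only [Nat.add_sub_cancel]
  set R : ℝ := ∫ ξ in Set.Ioi η, (ξ - η) ^ m * Real.exp (-ξ ^ 2) with hR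
  push_cast
  field_simp
  ring_nf
  linear_combination (R : ℂ) * hsq
end

section
/- For all integers n ≥ k ≥ 1 and every real number y, ∫_y^∞ (x−y)^{k−1} H_n(x) e^{−x²} dx = (k−1)! · e^{−y²} · H_{n−k}(y). -/
open Real MeasureTheory

/-- Physicists' Hermite polynomials: `H 0 = 1`, `H 1 x = 2x`,
`H (n+2) x = 2x * H (n+1) x - 2(n+1) * H n x`. -/
noncomputable def hermiteH : ℕ → ℝ → ℝ
  | 0 => fun _ => 1
  | 1 => fun x => 2 * x
  | (n + 2) => fun x => 2 * x * hermiteH (n + 1) x - 2 * (n + 1) * hermiteH n x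

section Helpers

open Filter Topology Polynomial Set Asymptotics

lemma hermiteH_rec (n : ℕ) (x : ℝ) :
    hermiteH (n + 1) x = 2 * x * hermiteH n x - 2 * n * hermiteH (n - 1) x := by
  cases n with
  | zero => simp [hermiteH]
  | succ m => simp [hermiteH]

lemma hermiteH_exists_poly (n : ℕ) : ∃ p : ℝ[X], ∀ x, hermiteH n x = p.eval x := by
  have key : ∀ m : ℕ, (∃ p : ℝ[X], ∀ x, hermiteH m x = p.eval x) ∧
      (∃ p : ℝ[X], ∀ x, hermiteH (m + 1) x = p.eval x) := by
    intro m
    induction m with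
    | zero => exact ⟨⟨1, by simp [hermiteH]⟩, ⟨C 2 * X, by simp [hermiteH]⟩⟩
    | succ m ih =>
      obtain ⟨⟨p, hp⟩, ⟨q, hq⟩⟩ := ih
      refine ⟨⟨q, hq⟩, ⟨C 2 * X * q - C ((2:ℝ) * (m + 1)) * p, fun x => ?_⟩⟩
      show 2 * x * hermiteH (m + 1) x - 2 * (m + 1) * hermiteH m x = _
      simp [hp, hq]
  exact (key n).1

lemma hermiteH_hasDerivAt (n : ℕ) (x : ℝ) :
    HasDerivAt (hermiteH n) (2 * n * hermiteH (n - 1) x) x := by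
  induction n using Nat.strong_induction_on with
  | _ n ih =>
  match n with
  | 0 =>
    have h0 : HasDerivAt (hermiteH 0) _ x := hasDerivAt_const x (1:ℝ)
    simpa using h0
  | 1 => simpa [hermiteH] using ((hasDerivAt_id x).const_mul (2:ℝ))
  | (m+2) =>
    have h1 := ih (m+1) (by omega)
    have h2 := ih m (by omega)
    have hx : HasDerivAt (fun x : ℝ => 2 * x) 2 x := by
      simpa using (hasDerivAt_id x).const_mul (2:ℝ)
    have this : HasDerivAt (fun x => 2 * x * hermiteH (m+1) x - 2 * (m+1:ℝ) * hermiteH m x) _ x :=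
      ((hx.mul h1).sub (h2.const_mul (2 * (m+1):ℝ)))
    have heq : (fun x => 2 * x * hermiteH (m+1) x - 2 * (m+1) * hermiteH m x)
        = hermiteH (m+2) := by
      funext z; simp [hermiteH]
    rw [heq] at this
    convert this using 1
    have := hermiteH_rec (m+1) x
    push_cast at this ⊢
    simp only [Nat.add_sub_cancel] at *
    nlinarith [hermiteH_rec m x, this]

lemma tendsto_poly_mul_exp (p : ℝ[X]) (c : ℝ) :
    Tendsto (fun x => p.eval x * Real.exp (c * x - x ^ 2)) atTop (𝓝 0) := by
  have h1 := p.tendsto_div_exp_atTop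
  have h2 : Tendsto (fun x : ℝ => Real.exp ((c + 1) * x - x ^ 2)) atTop (𝓝 0) := by
    apply Real.tendsto_exp_atBot.comp
    have hg : Tendsto (fun x : ℝ => (c + 2) ^ 2 / 4 - x) atTop atBot :=
      tendsto_atBot_add_const_left _ _ tendsto_neg_atTop_atBot
    refine tendsto_atBot_mono (fun x => ?_) hg
    nlinarith [sq_nonneg (x - (c + 2) / 2)]
  have h := h1.mul h2
  rw [mul_zero] at h
  refine h.congr (fun x => ?_)
  rw [div_mul_eq_mul_div, mul_div_assoc, ← Real.exp_sub]
  ring_nf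

lemma integrableOn_poly_mul_exp (p : ℝ[X]) (y : ℝ) :
    IntegrableOn (fun x => p.eval x * Real.exp (-x ^ 2)) (Set.Ioi y) := by
  apply integrable_of_isBigO_exp_neg (one_pos) (Continuous.continuousOn (p.continuous.mul (Real.continuous_exp.comp (continuous_pow 2).neg)))
  apply Asymptotics.IsLittleO.isBigO
  apply Asymptotics.isLittleO_of_tendsto (fun x h => absurd h (Real.exp_ne_zero _))
  have := tendsto_poly_mul_exp p 1
  refine this.congr (fun x => ?_)
  simp only [Pi.mul_apply, Function.comp_apply, Pi.neg_apply]
  rw [mul_div_assoc, ← Real.exp_sub]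
  ring_nf

lemma integrable_integrand (j n : ℕ) (y : ℝ) :
    IntegrableOn (fun x => (x - y) ^ j * hermiteH n x * Real.exp (-x ^ 2)) (Set.Ioi y) := by
  obtain ⟨q, hq⟩ := hermiteH_exists_poly n
  have := integrableOn_poly_mul_exp ((X - C y) ^ j * q) y
  refine this.congr_fun (fun x _ => ?_) measurableSet_Ioi
  simp [hq]

lemma tendsto_integrand (j n : ℕ) (y : ℝ) :
    Tendsto (fun x => (x - y) ^ j * -(Real.exp (-x ^ 2) * hermiteH n x)) atTop (𝓝 0) := by
  obtain ⟨q, hq⟩ := hermiteH_exists_poly n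
  have := (tendsto_poly_mul_exp (-((X - C y) ^ j * q)) 0)
  refine this.congr (fun x => ?_)
  simp [hq]
  ring_nf

lemma keyDeriv (n : ℕ) (x : ℝ) :
    HasDerivAt (fun x => -(Real.exp (-x ^ 2) * hermiteH n x))
      (Real.exp (-x ^ 2) * hermiteH (n + 1) x) x := by
  have h1 : HasDerivAt (fun x : ℝ => Real.exp (-x ^ 2)) (Real.exp (-x ^ 2) * -(2 * x)) x := by
    have : HasDerivAt (fun x : ℝ => -x ^ 2) (-(2 * x)) x := by
      have h0 : HasDerivAt (fun x : ℝ => -x ^ 2) _ x := (hasDerivAt_pow 2 x).neg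
      simpa using h0
    exact this.exp
  have h2 := hermiteH_hasDerivAt n x
  have this : HasDerivAt (fun x => -(Real.exp (-x ^ 2) * hermiteH n x)) _ x := (h1.mul h2).neg
  convert this using 1
  rw [hermiteH_rec n x]
  ring

lemma main_lemma : ∀ (j : ℕ), ∀ (n : ℕ), j + 1 ≤ n → ∀ y : ℝ,
    ∫ x in Set.Ioi y, (x - y) ^ j * hermiteH n x * Real.exp (-x ^ 2)
      = j.factorial * Real.exp (-y ^ 2) * hermiteH (n - (j + 1)) y := by
  intro j
  induction j with
  | zero =>
    intro n hn y
    obtain ⟨m, rfl⟩ : ∃ m, n = m + 1 := ⟨n - 1, by omega⟩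
    have key := integral_Ioi_of_hasDerivAt_of_tendsto'
      (f := fun x => -(Real.exp (-x ^ 2) * hermiteH m x))
      (f' := fun x => Real.exp (-x ^ 2) * hermiteH (m + 1) x) (a := y) (m := 0)
      (fun x _ => keyDeriv m x)
      ((integrable_integrand 0 (m + 1) y).congr_fun
        (fun x _ => by beta_reduce; rw [pow_zero, one_mul, mul_comm]) measurableSet_Ioi)
      (by simpa using tendsto_integrand 0 m y)
    simp only [pow_zero, one_mul] at key ⊢
    rw [show (∫ x in Set.Ioi y, hermiteH (m + 1) x * Real.exp (-x ^ 2))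
        = ∫ x in Set.Ioi y, Real.exp (-x ^ 2) * hermiteH (m + 1) x by
      congr 1; funext x; ring]
    rw [key]
    simp [Nat.factorial]
  | succ j ih =>
    intro n hn y
    obtain ⟨m, rfl⟩ : ∃ m, n = m + 1 := ⟨n - 1, by omega⟩
    have hjm : j + 1 ≤ m := by omega
    -- g x = (x - y)^(j+1) * (-(exp(-x²) * H_m x))
    have hderiv : ∀ x : ℝ, HasDerivAt
        (fun x => (x - y) ^ (j + 1) * -(Real.exp (-x ^ 2) * hermiteH m x))
        ((j + 1 : ℝ) * (x - y) ^ j * -(Real.exp (-x ^ 2) * hermiteH m x)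
          + (x - y) ^ (j + 1) * (Real.exp (-x ^ 2) * hermiteH (m + 1) x)) x := by
      intro x
      have hp : HasDerivAt (fun x : ℝ => (x - y) ^ (j + 1))
          ((j + 1 : ℝ) * (x - y) ^ j) x := by
        have h0 : HasDerivAt (fun x : ℝ => (x - y) ^ (j + 1)) _ x :=
          ((hasDerivAt_id x).sub_const y).pow (j + 1)
        simpa using h0
      exact hp.mul (keyDeriv m x)
    have hint1 : IntegrableOn
        (fun x => (j + 1 : ℝ) * (x - y) ^ j * -(Real.exp (-x ^ 2) * hermiteH m x))
        (Set.Ioi y) := by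
      have base : IntegrableOn
          (fun x => -((j + 1 : ℝ) * ((x - y) ^ j * hermiteH m x * Real.exp (-x ^ 2))))
          (Set.Ioi y) := ((integrable_integrand j m y).const_mul (j + 1 : ℝ)).neg
      refine base.congr_fun (fun x _ => by ring) measurableSet_Ioi
    have hint2 : IntegrableOn
        (fun x => (x - y) ^ (j + 1) * (Real.exp (-x ^ 2) * hermiteH (m + 1) x))
        (Set.Ioi y) := by
      refine (integrable_integrand (j + 1) (m + 1) y).congr_fun (fun x _ => by ring)
        measurableSet_Ioi
    have key := integral_Ioi_of_hasDerivAt_of_tendsto' (a := y) (m := 0)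
      (fun x _ => hderiv x) (hint1.add hint2)
      (tendsto_integrand (j + 1) m y)
    simp only [sub_self, zero_pow (Nat.succ_ne_zero j), zero_mul, sub_zero, mul_zero,
      neg_zero, zero_sub, sub_neg_eq_add, zero_add] at key
    rw [MeasureTheory.integral_add hint1 hint2] at key
    have hI : ∫ x in Set.Ioi y, (x - y) ^ (j + 1) * (Real.exp (-x ^ 2) * hermiteH (m + 1) x)
        = (j + 1 : ℝ) * ∫ x in Set.Ioi y, (x - y) ^ j * hermiteH m x * Real.exp (-x ^ 2) := by
      have hneg : ∫ x in Set.Ioi y, (j + 1 : ℝ) * (x - y) ^ j * -(Real.exp (-x ^ 2) * hermiteH m x)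
          = -((j + 1 : ℝ) * ∫ x in Set.Ioi y, (x - y) ^ j * hermiteH m x * Real.exp (-x ^ 2)) := by
        rw [← MeasureTheory.integral_const_mul, ← MeasureTheory.integral_neg]
        congr 1; funext x; ring
      rw [hneg] at key
      linarith [key]
    rw [show (∫ x in Set.Ioi y, (x - y) ^ (j + 1) * hermiteH (m + 1) x * Real.exp (-x ^ 2))
        = ∫ x in Set.Ioi y, (x - y) ^ (j + 1) * (Real.exp (-x ^ 2) * hermiteH (m + 1) x) by
      congr 1; funext x; ring]
    rw [hI, ih m hjm y]
    have : m + 1 - (j + 1 + 1) = m - (j + 1) := by omega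
    rw [this, Nat.factorial_succ]
    push_cast
    ring


end Helpers

/-- For `n ≥ k ≥ 1` and real `y`,
`∫_y^∞ (x-y)^{k-1} H_n(x) e^{-x²} dx = (k-1)! e^{-y²} H_{n-k}(y)`. -/
theorem stmt2 (n k : ℕ) (hk : 1 ≤ k) (hkn : k ≤ n) (y : ℝ) :
    ∫ x in Set.Ioi y, (x - y) ^ (k - 1) * hermiteH n x * Real.exp (-x ^ 2) =
      (k - 1).factorial * Real.exp (-y ^ 2) * hermiteH (n - k) y := by
  obtain ⟨j, rfl⟩ : ∃ j, k = j + 1 := ⟨k - 1, by omega⟩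
  simpa using main_lemma j n (by omega) y
end

section
/- Let 0 < q < 1 be real and set a = q²/(1−q²). For an integer N ≥ 1 define E_N = q/(a√(N/2)), r₁(N) = 1/q − 2/(a√(N/2)), and w_N(t) = r₁(N)·e^{i t E_N} for real t the parametrization of the circle of radius r₁(N) about the origin; let F(z) = ln|z−q| − (1−q²)^{−1} ln|z| (the real part of f(z) = log(z−q) − (1−q²)^{−1} log z). Then there exist a constant C > 0 (depending only on q) and an integer N₀ such that for all N ≥ N₀ and all real t with |t| ≤ π/E_N, N·( F(w_N(0)) − F(w_N(t)) ) ≤ −C t². -/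
set_option maxHeartbeats 1000000

open Real Complex

lemma aux_abs_sq (r q θ : ℝ) :
    ‖(r:ℂ) * Complex.exp ((θ:ℝ) * Complex.I) - (q:ℂ)‖ ^ 2
      = (r - q)^2 + 2*r*q*(1 - Real.cos θ) := by
  rw [Complex.sq_norm, Complex.normSq_apply]
  simp [Complex.exp_ofReal_mul_I_re, Complex.exp_ofReal_mul_I_im, Complex.mul_re, Complex.mul_im]
  linear_combination r^2 * Real.sin_sq_add_cos_sq θ

lemma aux_abs_val (r q : ℝ) (θ : ℝ) :
    ‖(r:ℂ) * Complex.exp ((θ:ℝ) * Complex.I) - (q:ℂ)‖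
      = Real.sqrt ((r - q)^2 + 2*r*q*(1 - Real.cos θ)) := by
  rw [← aux_abs_sq r q θ, Real.sqrt_sq_eq_abs, _root_.abs_of_nonneg (norm_nonneg _)]

lemma aux_abs_mod (r θ : ℝ) (hr : 0 ≤ r) :
    ‖(r:ℂ) * Complex.exp ((θ:ℝ) * Complex.I)‖ = r := by
  rw [norm_mul, Complex.norm_exp]
  simp [_root_.abs_of_nonneg hr]

/-- The purely real-variable core of the estimate, stated for opaque reals. -/
lemma aux_core (q b K C nn t r E θ : ℝ)
    (hq0 : 0 < q) (h1q : (0:ℝ) < 1 - q^2)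
    (hb0 : 0 < b) (hK : K = 16 / b^2)
    (hC : C = 4*q^2/(Real.pi^2*(1+K)))
    (hrq : b/2 ≤ r - q) (hrub : r - q ≤ b) (hrq1 : r * q ≤ 1)
    (hθdef : θ = t * E)
    (hθ : |θ| ≤ Real.pi)
    (hNE : nn * E^2 = 2 * b^2) (hnn : 0 < nn) :
    nn * ((Real.log (r-q) - (1 - q^2)⁻¹ * Real.log r) -
      (Real.log ((r - q)^2 + 2*r*q*(1 - Real.cos θ)) / 2 - (1 - q^2)⁻¹ * Real.log r))
      ≤ -C * t^2 := by
  have hpi : (0:ℝ) < Real.pi := Real.pi_pos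
  have hK0 : 0 < K := by rw [hK]; positivity
  have hqr : q < r := by linarith
  have hr0 : 0 < r := by linarith
  have hcos : 2/Real.pi^2 * θ^2 ≤ 1 - Real.cos θ := by
    have := Real.cos_le_one_sub_mul_cos_sq hθ; linarith
  have hcos2 : 1 - Real.cos θ ≤ 2 := by have := Real.neg_one_le_cos θ; linarith
  have hcos0 : 0 ≤ 1 - Real.cos θ := by have := Real.cos_le_one θ; linarith
  have hP0 : (0:ℝ) < (r-q)^2 := pow_pos (by linarith) 2
  set u : ℝ := 2*r*q*(1 - Real.cos θ) / (r-q)^2 with hu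
  have hu0 : 0 ≤ u := by
    apply div_nonneg _ (sq_nonneg _)
    exact mul_nonneg (mul_nonneg (by linarith : (0:ℝ) ≤ 2*r) hq0.le) hcos0
  have hDu : (r - q)^2 + 2*r*q*(1 - Real.cos θ) = (r-q)^2 * (1+u) := by
    rw [hu, mul_add, mul_one, mul_div_assoc', mul_div_right_comm, div_self (ne_of_gt hP0), one_mul]
  have hlogD : Real.log ((r - q)^2 + 2*r*q*(1 - Real.cos θ))
      = 2 * Real.log (r - q) + Real.log (1 + u) := by
    rw [hDu, Real.log_mul (ne_of_gt hP0) (by linarith : (1:ℝ) + u ≠ 0), Real.log_pow]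
    push_cast; ring
  -- Step A : (4q²/π²) t² ≤ (nn/2) u
  have hstepA : (4*q^2/Real.pi^2) * t^2 ≤ (nn/2) * u := by
    have hθ2 : θ^2 = t^2 * E^2 := by rw [hθdef]; ring
    have h1 : (nn/2) * (2*q*q*(2/Real.pi^2 * θ^2)) ≤ (nn/2) * (2*r*q*(1 - Real.cos θ)) := by
      apply mul_le_mul_of_nonneg_left _ (by positivity)
      have hq2 : (0:ℝ) ≤ 2*q*q := by positivity
      calc 2*q*q*(2/Real.pi^2 * θ^2) ≤ 2*q*q*(1 - Real.cos θ) :=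
            mul_le_mul_of_nonneg_left hcos hq2
      _ ≤ 2*r*q*(1 - Real.cos θ) := by
            have hh := mul_nonneg hcos0 (mul_nonneg hq0.le (by linarith : (0:ℝ) ≤ r - q))
            nlinarith [hh]
    have h2 : (nn/2) * (2*q*q*(2/Real.pi^2 * θ^2)) = (4*q^2/Real.pi^2) * t^2 * b^2 := by
      rw [hθ2]
      have hpi2 : Real.pi^2 ≠ 0 := by positivity
      linear_combination (2*q^2*t^2/Real.pi^2) * hNE
    have h3 : (r-q)^2 ≤ b^2 := by nlinarith
    have h4 : (4*q^2/Real.pi^2) * t^2 * (r-q)^2 ≤ (nn/2) * (2*r*q*(1 - Real.cos θ)) := by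
      calc (4*q^2/Real.pi^2) * t^2 * (r-q)^2 ≤ (4*q^2/Real.pi^2) * t^2 * b^2 := by
            apply mul_le_mul_of_nonneg_left h3 (by positivity)
      _ = (nn/2) * (2*q*q*(2/Real.pi^2 * θ^2)) := h2.symm
      _ ≤ (nn/2) * (2*r*q*(1 - Real.cos θ)) := h1
    have h5 : (nn/2) * u = (nn/2) * (2*r*q*(1 - Real.cos θ)) / (r-q)^2 := by
      rw [hu]; ring
    rw [h5, le_div_iff₀ hP0]
    exact h4
  -- Step B : log (1+u) ≥ u/(1+K)
  have hlog1u : u / (1+u) ≤ Real.log (1+u) := by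
    have h := Real.log_le_sub_one_of_pos (show (0:ℝ) < (1+u)⁻¹ by positivity)
    rw [Real.log_inv] at h
    have h2 : (1+u)⁻¹ - 1 = -(u/(1+u)) := by field_simp; ring
    linarith [h2 ▸ h]
  have huK : u ≤ K := by
    rw [hu, div_le_iff₀ hP0]
    have hKb : K * b^2 = 16 := by rw [hK]; field_simp
    have hx1 : 2*r*q*(1 - Real.cos θ) ≤ 4 := by
      nlinarith [mul_pos hr0 hq0, hcos2, hcos0, hrq1]
    have hx2 : (0:ℝ) ≤ K * ((r-q-b/2) * (r-q+b/2)) :=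
      mul_nonneg hK0.le (mul_nonneg (by linarith) (by linarith))
    nlinarith [hKb, hx2]
  have hfrac : u/(1+K) ≤ u/(1+u) := by
    rw [div_le_div_iff₀ (by linarith) (by linarith)]
    nlinarith
  have hstepB : u/(1+K) ≤ Real.log (1+u) := le_trans hfrac hlog1u
  -- Combine
  have hmain : C * t^2 ≤ (nn/2) * Real.log (1+u) := by
    have h6 : (nn/2) * (u/(1+K)) ≤ (nn/2) * Real.log (1+u) :=
      mul_le_mul_of_nonneg_left hstepB (by positivity)
    have h7 : C * t^2 ≤ (nn/2) * (u/(1+K)) := by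
      have h8 : (nn/2) * (u/(1+K)) = ((nn/2) * u)/(1+K) := by ring
      rw [h8, le_div_iff₀ (by linarith : (0:ℝ) < 1+K), hC]
      calc 4*q^2/(Real.pi^2*(1+K)) * t^2 * (1+K) = (4*q^2/Real.pi^2) * t^2 := by
            field_simp
      _ ≤ (nn/2) * u := hstepA
    linarith
  have hfinal : nn * ((Real.log (r-q) - (1 - q^2)⁻¹ * Real.log r) -
      (Real.log ((r - q)^2 + 2*r*q*(1 - Real.cos θ)) / 2 - (1 - q^2)⁻¹ * Real.log r))
      = -((nn/2) * Real.log (1+u)) := by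
    rw [hlogD]; ring
  rw [hfinal]
  linarith

/-- Let `0 < q < 1`, `a = q²/(1-q²)`, `E_N = q/(a√(N/2))`, `r₁(N) = 1/q - 2/(a√(N/2))`,
`w_N(t) = r₁(N) e^{itE_N}`, and `F(z) = ln|z-q| - (1-q²)⁻¹ ln|z|`. Then there are
`C > 0` and `N₀` such that for all `N ≥ N₀` and `|t| ≤ π/E_N`,
`N (F(w_N(0)) - F(w_N(t))) ≤ -C t²`. -/
theorem stmt16 (q : ℝ) (hq0 : 0 < q) (hq1 : q < 1) :
    ∃ C > (0 : ℝ), ∃ N₀ : ℕ, ∀ N : ℕ, N₀ ≤ N → ∀ t : ℝ,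
      |t| ≤ Real.pi / (q / ((q ^ 2 / (1 - q ^ 2)) * Real.sqrt ((N : ℝ) / 2))) →
      (N : ℝ) *
          ((fun z : ℂ => Real.log (‖z - (q : ℂ)‖) -
              (1 - q ^ 2)⁻¹ * Real.log (‖z‖))
              (((1 / q - 2 / ((q ^ 2 / (1 - q ^ 2)) * Real.sqrt ((N : ℝ) / 2))) : ℝ) *
                Complex.exp ((0 : ℝ) * (q / ((q ^ 2 / (1 - q ^ 2)) *
                  Real.sqrt ((N : ℝ) / 2))) * Complex.I)) -
            (fun z : ℂ => Real.log (‖z - (q : ℂ)‖) -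
              (1 - q ^ 2)⁻¹ * Real.log (‖z‖))
              (((1 / q - 2 / ((q ^ 2 / (1 - q ^ 2)) * Real.sqrt ((N : ℝ) / 2))) : ℝ) *
                Complex.exp ((t : ℝ) * (q / ((q ^ 2 / (1 - q ^ 2)) *
                  Real.sqrt ((N : ℝ) / 2))) * Complex.I))) ≤
        -C * t ^ 2 := by
  have h1q : (0:ℝ) < 1 - q^2 := by nlinarith
  have hpi : (0:ℝ) < Real.pi := Real.pi_pos
  set b : ℝ := (1 - q^2)/q with hb
  have hb0 : 0 < b := by positivity
  set K : ℝ := 16 / b^2 with hK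
  have hK0 : 0 < K := by rw [hK]; positivity
  set C : ℝ := 4*q^2/(Real.pi^2*(1+K)) with hC
  have hC0 : 0 < C := by rw [hC]; positivity
  clear_value b K C
  refine ⟨C, hC0, ⌈32/q^2⌉₊ + 1, fun N hN t ht => ?_⟩
  have hNq : 32/q^2 ≤ (N:ℝ) := by
    calc 32/q^2 ≤ (⌈32/q^2⌉₊ : ℝ) := Nat.le_ceil _
    _ ≤ (N:ℝ) := by exact_mod_cast (by omega : ⌈32/q^2⌉₊ ≤ N)
  have hN0 : (0:ℝ) < N := lt_of_lt_of_le (by positivity) hNq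
  simp only []
  set S := Real.sqrt ((N:ℝ)/2) with hS
  have hS0 : 0 < S := Real.sqrt_pos.mpr (by positivity)
  have hS2 : S^2 = (N:ℝ)/2 := Real.sq_sqrt (by positivity)
  have hSq : 4/q ≤ S := by
    rw [hS, show (4:ℝ)/q = Real.sqrt ((4/q)^2) from (Real.sqrt_sq (by positivity)).symm]
    apply Real.sqrt_le_sqrt
    have h4 : (4/q)^2 = (32/q^2)/2 := by field_simp; ring
    linarith [h4]
  clear_value S
  set A : ℝ := q^2/(1-q^2) with hA
  set E := q / (A * S) with hE
  set r := 1/q - 2/(A*S) with hr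
  have hA0 : 0 < A := by rw [hA]; exact div_pos (by positivity) h1q
  have hE0 : 0 < E := by rw [hE]; exact div_pos hq0 (by positivity)
  have hAb : A * b = q := by rw [hA, hb]; field_simp
  have hrqb : r - q = b - 2/(A*S) := by rw [hr, hb]; field_simp; ring
  have hcast : ∀ u : ℝ, ((u:ℂ) * ((q:ℂ) / ((q:ℂ) ^ 2 / (1 - (q:ℂ) ^ 2) * (S:ℂ))) : ℂ)
      = ((u * E : ℝ) : ℂ) := by
    intro u; rw [hE, hA]; push_cast; ring
  have hNE : (N:ℝ) * E^2 = 2 * b^2 := by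
    have hE' : E = b / S := by
      rw [hE, eq_div_iff (ne_of_gt hS0)]
      rw [div_mul_eq_mul_div, div_eq_iff (by positivity : A * S ≠ 0)]
      nlinarith [hAb]
    rw [hE', div_pow, hS2]
    field_simp
  clear_value A E r
  have h2AS : 2/(A*S) ≤ b/2 := by
    rw [div_le_div_iff₀ (by positivity) two_pos]
    have h44 : q * (4/q) ≤ q * S := mul_le_mul_of_nonneg_left hSq hq0.le
    have h45 : q * (4/q) = 4 := by field_simp
    nlinarith [hAb]
  have h2AS0 : (0:ℝ) ≤ 2/(A*S) := by positivity
  have hrq : b/2 ≤ r - q := by linarith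
  have hrub : r - q ≤ b := by linarith
  have hqr : q < r := by linarith
  have hr0 : 0 < r := by linarith
  have hriq : r ≤ 1/q := by
    have : r = 1/q - 2/(A*S) := hr
    linarith
  have hrq1 : r * q ≤ 1 := by
    have h := mul_le_mul_of_nonneg_right hriq hq0.le
    have h1 : (1/q) * q = 1 := by field_simp
    linarith
  rw [hcast 0, hcast t, aux_abs_val r q (0*E), aux_abs_val r q (t*E),
    aux_abs_mod r (0*E) hr0.le, aux_abs_mod r (t*E) hr0.le]
  simp only [zero_mul, Real.cos_zero, sub_self, mul_zero, add_zero]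
  rw [Real.sqrt_sq (by linarith : (0:ℝ) ≤ r - q), Real.log_sqrt (by
      have hcc : (0:ℝ) ≤ 1 - Real.cos (t*E) := by linarith [Real.cos_le_one (t*E)]
      have := mul_nonneg (mul_nonneg (by linarith : (0:ℝ) ≤ 2*r) hq0.le) hcc
      nlinarith [sq_nonneg (r-q)] : (0:ℝ) ≤ (r - q)^2 + 2*r*q*(1 - Real.cos (t*E)))]
  have hθ : |t * E| ≤ Real.pi := by
    rw [abs_mul, _root_.abs_of_pos hE0]
    calc |t| * E ≤ (Real.pi / E) * E := mul_le_mul_of_nonneg_right ht hE0.le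
    _ = Real.pi := by field_simp
  exact aux_core q b K C (N:ℝ) t r E (t*E) hq0 h1q hb0 hK hC hrq hrub hrq1 rfl hθ hNE hN0
end

section
/- For an integer N ≥ 1 define E_N = 1/√(N/2), r₁(N) = 2 − 2/√(N/8), and w_N(t) = −1 + r₁(N)·e^{i t E_N} for real t; let F(z) = (1/2)·ln|z| − ln|1+z| (the real part of f(z) = (1/2)log z − log(1+z)). Then there exist an absolute constant C > 0 and an integer N₀ such that for all N ≥ N₀ and all real t with |t| ≤ π/E_N, N·( F(w_N(0)) − F(w_N(t)) ) ≤ −C t². -/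
open Real Complex

lemma sq_abs_w (r θ : ℝ) :
    ‖-1 + (r : ℂ) * Complex.exp ((θ : ℂ) * Complex.I)‖ ^ 2
      = 1 - 2 * r * Real.cos θ + r ^ 2 := by
  rw [Complex.sq_norm, Complex.normSq_apply]
  simp [Complex.exp_ofReal_mul_I_re, Complex.exp_ofReal_mul_I_im]
  nlinarith [Real.sin_sq_add_cos_sq θ]

lemma abs_one_add_w (r θ : ℝ) (hr : 0 ≤ r) :
    ‖1 + (-1 + (r : ℂ) * Complex.exp ((θ : ℂ) * Complex.I))‖ = r := by
  have h : (1 : ℂ) + (-1 + (r : ℂ) * Complex.exp ((θ : ℂ) * Complex.I))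
      = (r : ℂ) * Complex.exp ((θ : ℂ) * Complex.I) := by ring
  rw [h, norm_mul, Complex.norm_exp_ofReal_mul_I, Complex.norm_real, Real.norm_eq_abs,
    _root_.abs_of_nonneg hr, mul_one]

lemma core (r θ : ℝ) (hr1 : 3 / 2 ≤ r) (hr2 : r ≤ 2) (hθ : |θ| ≤ Real.pi) :
    θ ^ 2 / (6 * Real.pi ^ 2) ≤
      Real.log ((1 - 2 * r * Real.cos θ + r ^ 2) / (r - 1) ^ 2) := by
  have hπ := Real.pi_pos
  have hp : (0 : ℝ) < Real.pi ^ 2 := by positivity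
  have hc1 := Real.cos_le_one θ
  have hc2 := Real.neg_one_le_cos θ
  have hcb := Real.cos_le_one_sub_mul_cos_sq hθ
  have hA0pos : (0 : ℝ) < (r - 1) ^ 2 := by nlinarith
  have hA0le : (r - 1) ^ 2 ≤ 1 := by nlinarith
  have hA0ge : (1 : ℝ) / 4 ≤ (r - 1) ^ 2 := by nlinarith
  have hge : (r - 1) ^ 2 ≤ 1 - 2 * r * Real.cos θ + r ^ 2 := by nlinarith
  have hAtpos : 0 < 1 - 2 * r * Real.cos θ + r ^ 2 := by nlinarith
  have hAtle : 1 - 2 * r * Real.cos θ + r ^ 2 ≤ 9 := by nlinarith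
  have f1 : 2 * θ ^ 2 ≤ Real.pi ^ 2 * (1 - Real.cos θ) := by
    have h2 : 2 / Real.pi ^ 2 * θ ^ 2 ≤ 1 - Real.cos θ := by linarith
    calc 2 * θ ^ 2 = Real.pi ^ 2 * (2 / Real.pi ^ 2 * θ ^ 2) := by
          field_simp
      _ ≤ Real.pi ^ 2 * (1 - Real.cos θ) := by
          exact mul_le_mul_of_nonneg_left h2 hp.le
  have hcosnn : 0 ≤ Real.pi ^ 2 * (1 - Real.cos θ) := by nlinarith
  have hθ2 : 0 ≤ θ ^ 2 := sq_nonneg θ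
  have f2 : θ ^ 2 * (1 - 2 * r * Real.cos θ + r ^ 2)
      ≤ 18 * (Real.pi ^ 2 * (1 - Real.cos θ)) := by nlinarith
  have hmain : θ ^ 2 / (6 * Real.pi ^ 2)
      ≤ ((1 - 2 * r * Real.cos θ + r ^ 2) - (r - 1) ^ 2)
          / (1 - 2 * r * Real.cos θ + r ^ 2) := by
    rw [div_le_div_iff₀ (by positivity) hAtpos]
    nlinarith
  have heq : ((1 - 2 * r * Real.cos θ + r ^ 2) - (r - 1) ^ 2)
      / (1 - 2 * r * Real.cos θ + r ^ 2)
      = 1 - (r - 1) ^ 2 / (1 - 2 * r * Real.cos θ + r ^ 2) := by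
    field_simp
  have hlog := Real.one_sub_inv_le_log_of_pos
    (show 0 < (1 - 2 * r * Real.cos θ + r ^ 2) / (r - 1) ^ 2 by positivity)
  have hinv : ((1 - 2 * r * Real.cos θ + r ^ 2) / (r - 1) ^ 2)⁻¹
      = (r - 1) ^ 2 / (1 - 2 * r * Real.cos θ + r ^ 2) := inv_div _ _
  rw [hinv] at hlog
  rw [heq] at hmain
  linarith


set_option maxHeartbeats 1000000 in
/-- With `E_N = 1/√(N/2)`, `r₁(N) = 2 - 2/√(N/8)`, `w_N(t) = -1 + r₁(N) e^{itE_N}`, and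
`F(z) = (1/2) ln|z| - ln|1+z|`, there are an absolute constant `C > 0` and `N₀` such
that for all `N ≥ N₀` and `|t| ≤ π/E_N`, `N (F(w_N(0)) - F(w_N(t))) ≤ -C t²`. -/
theorem stmt17 :
    ∃ C > (0 : ℝ), ∃ N₀ : ℕ, ∀ N : ℕ, N₀ ≤ N → ∀ t : ℝ,
      |t| ≤ Real.pi / (1 / Real.sqrt ((N : ℝ) / 2)) →
      (N : ℝ) *
          ((fun z : ℂ => (1 / 2) * Real.log ‖z‖ -
              Real.log ‖1 + z‖)
              (-1 + ((2 - 2 / Real.sqrt ((N : ℝ) / 8)) : ℝ) *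
                Complex.exp ((0 : ℝ) * (1 / Real.sqrt ((N : ℝ) / 2)) * Complex.I)) -
            (fun z : ℂ => (1 / 2) * Real.log ‖z‖ -
              Real.log ‖1 + z‖)
              (-1 + ((2 - 2 / Real.sqrt ((N : ℝ) / 8)) : ℝ) *
                Complex.exp ((t : ℝ) * (1 / Real.sqrt ((N : ℝ) / 2)) * Complex.I))) ≤
        -C * t ^ 2 := by
  refine ⟨1 / (12 * Real.pi ^ 2), by positivity, 128, ?_⟩
  intro N hN t ht
  have hπ := Real.pi_pos
  have hNR : (128 : ℝ) ≤ (N : ℝ) := by exact_mod_cast hN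
  have hN0 : (0 : ℝ) < N := by linarith
  have hu0 : 0 < Real.sqrt ((N : ℝ) / 2) := Real.sqrt_pos.2 (by positivity)
  have hu2 : Real.sqrt ((N : ℝ) / 2) ^ 2 = (N : ℝ) / 2 := Real.sq_sqrt (by positivity)
  have hs0 : 0 ≤ Real.sqrt ((N : ℝ) / 8) := Real.sqrt_nonneg _
  have hs2 : Real.sqrt ((N : ℝ) / 8) ^ 2 = (N : ℝ) / 8 := Real.sq_sqrt (by positivity)
  have hs4 : 4 ≤ Real.sqrt ((N : ℝ) / 8) := by nlinarith
  have hsinv : 2 / Real.sqrt ((N : ℝ) / 8) ≤ 1 / 2 := by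
    rw [div_le_div_iff₀ (by linarith) (by norm_num)]; linarith
  have hsinv0 : 0 < 2 / Real.sqrt ((N : ℝ) / 8) := by positivity
  have hr1 : (3 : ℝ) / 2 ≤ 2 - 2 / Real.sqrt ((N : ℝ) / 8) := by linarith
  have hr2 : 2 - 2 / Real.sqrt ((N : ℝ) / 8) ≤ 2 := by linarith
  set r : ℝ := 2 - 2 / Real.sqrt ((N : ℝ) / 8) with hrdef
  set θ : ℝ := t / Real.sqrt ((N : ℝ) / 2) with hθdef
  clear_value r θ
  have hθabs : |θ| ≤ Real.pi := by
    rw [hθdef, abs_div, _root_.abs_of_pos hu0, div_le_iff₀ hu0]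
    calc |t| ≤ Real.pi / (1 / Real.sqrt ((N : ℝ) / 2)) := ht
      _ = Real.pi * Real.sqrt ((N : ℝ) / 2) := by
          rw [one_div, div_inv_eq_mul]
  have hθsq : θ ^ 2 = 2 * t ^ 2 / N := by
    rw [hθdef, div_pow, hu2]
    field_simp
  -- rewrite the complex expressions
  simp only
  rw [show ((0 : ℝ) * (1 / Real.sqrt ((N : ℝ) / 2)) * Complex.I : ℂ)
      = (((0 : ℝ)) : ℂ) * Complex.I by push_cast; ring]
  rw [show ((t : ℝ) * (1 / Real.sqrt ((N : ℝ) / 2)) * Complex.I : ℂ)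
      = ((θ : ℝ) : ℂ) * Complex.I by rw [hθdef]; push_cast; ring]
  rw [abs_one_add_w r 0 (by linarith), abs_one_add_w r θ (by linarith)]
  have habs0 : ‖-1 + (r : ℂ) * Complex.exp (((0 : ℝ) : ℂ) * Complex.I)‖
      = r - 1 := by
    have h : (-1 + (r : ℂ) * Complex.exp (((0 : ℝ) : ℂ) * Complex.I))
        = ((r - 1 : ℝ) : ℂ) := by
      push_cast
      simp [Complex.exp_zero]
      ring
    rw [h, Complex.norm_real, Real.norm_eq_abs, _root_.abs_of_pos (by linarith)]
  rw [habs0]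
  -- log identities
  have hc1 := Real.cos_le_one θ
  have hc2 := Real.neg_one_le_cos θ
  have hA0pos : (0 : ℝ) < (r - 1) ^ 2 := by nlinarith
  have hAtpos : 0 < 1 - 2 * r * Real.cos θ + r ^ 2 := by nlinarith
  have hlogwt : Real.log ‖-1 + (r : ℂ) * Complex.exp ((θ : ℂ) * Complex.I)‖
      = Real.log (1 - 2 * r * Real.cos θ + r ^ 2) / 2 := by
    rw [← sq_abs_w r θ, Real.log_pow]
    push_cast
    ring
  have hlogw0 : Real.log (r - 1) = Real.log ((r - 1) ^ 2) / 2 := by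
    rw [Real.log_pow]
    push_cast
    ring
  rw [hlogwt, hlogw0]
  have hlogdiv : Real.log ((1 - 2 * r * Real.cos θ + r ^ 2) / (r - 1) ^ 2)
      = Real.log (1 - 2 * r * Real.cos θ + r ^ 2) - Real.log ((r - 1) ^ 2) :=
    Real.log_div hAtpos.ne' hA0pos.ne'
  have hcore := core r θ hr1 hr2 hθabs
  rw [hlogdiv] at hcore
  rw [hθsq] at hcore
  have hp : (0 : ℝ) < Real.pi ^ 2 := by positivity
  have hkey : t ^ 2 / (3 * Real.pi ^ 2 * N) ≤
      Real.log (1 - 2 * r * Real.cos θ + r ^ 2) - Real.log ((r - 1) ^ 2) := by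
    refine le_trans (le_of_eq ?_) hcore
    field_simp
    ring
  have hmul := mul_le_mul_of_nonneg_left hkey (show (0 : ℝ) ≤ (N : ℝ) / 4 by positivity)
  have heval : (N : ℝ) / 4 * (t ^ 2 / (3 * Real.pi ^ 2 * N)) = t ^ 2 / (12 * Real.pi ^ 2) := by
    field_simp
    ring
  rw [heval] at hmul
  have : -(1 / (12 * Real.pi ^ 2)) * t ^ 2 = -(t ^ 2 / (12 * Real.pi ^ 2)) := by ring
  rw [this]
  linarith [hmul]
end
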